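/- arXiv:0712.2810 — 3 statements merged into one kernel-verified Lean document; each statement's English description precedes it below -/
import Mathlib

section
/- Let N ≥ 2, let N_1 = ⌊N/2⌋ and N_2 = N − N_1. Let x_1, …, x_N ∈ ℤ³ and let f : [0,∞) → [0,∞) be any nonnegative function. For each partition P = (π_1, π_2) of {1,…,N} into disjoint sets with |π_1| = N_1 and |π_2| = N_2, and each i ∈ π_1, let D_i^P = min{|x_i − x_j| : j ∈ π_2}. With D_i = min_{j≠i} |x_i − x_j|, one has Σ_{i=1}^N f(D_i) ≤ 4 · binom(N, N_1)^{−1} Σ_P Σ_{i∈π_1} f(D_i^P), where the outer sum runs over all binom(N, N_1) such partitions. -/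
open scoped BigOperators

abbrev Z3 := Fin 3 → ℤ

noncomputable section

/-- The Euclidean norm of a point of `ℤ³`. -/
def enormZ (x : Z3) : ℝ := Real.sqrt (∑ i, ((x i : ℝ))^2)

/-- `D_i = min_{j ≠ i} |x_i - x_j|`. -/
def Dmin {N : ℕ} (x : Fin N → Z3) (i : Fin N) : ℝ :=
  sInf {d : ℝ | ∃ j, j ≠ i ∧ d = enormZ (x i - x j)}

/-- `D_i^P = min{|x_i - x_j| : j ∈ π₂}` for the partition `P = (π₁, π₂)` determined by
the set `S = π₁` (so `π₂` is the complement of `S`). -/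
def DminP {N : ℕ} (x : Fin N → Z3) (S : Finset (Fin N)) (i : Fin N) : ℝ :=
  sInf {d : ℝ | ∃ j, j ∉ S ∧ d = enormZ (x i - x j)}

/-- The set defining `Dmin` is finite. -/
lemma Dmin_set_finite {N : ℕ} (x : Fin N → Z3) (i : Fin N) :
    {d : ℝ | ∃ j, j ≠ i ∧ d = enormZ (x i - x j)}.Finite := by
  apply Set.Finite.subset (Set.finite_range (fun j : Fin N => enormZ (x i - x j)))
  rintro d ⟨j, -, rfl⟩
  exact ⟨j, rfl⟩

lemma DminP_set_finite {N : ℕ} (x : Fin N → Z3) (S : Finset (Fin N)) (i : Fin N) :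
    {d : ℝ | ∃ j, j ∉ S ∧ d = enormZ (x i - x j)}.Finite := by
  apply Set.Finite.subset (Set.finite_range (fun j : Fin N => enormZ (x i - x j)))
  rintro d ⟨j, -, rfl⟩
  exact ⟨j, rfl⟩

/-- `Dmin` is attained. -/
lemma Dmin_attained {N : ℕ} (hN : 2 ≤ N) (x : Fin N → Z3) (i : Fin N) :
    ∃ j, j ≠ i ∧ Dmin x i = enormZ (x i - x j) := by
  have hne : {d : ℝ | ∃ j, j ≠ i ∧ d = enormZ (x i - x j)}.Nonempty := by
    obtain ⟨j, hj⟩ := Fintype.exists_ne_of_one_lt_card (by rw [Fintype.card_fin]; omega) i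
    exact ⟨enormZ (x i - x j), j, hj, rfl⟩
  exact hne.csInf_mem (Dmin_set_finite x i)

/-- `Dmin` is a lower bound. -/
lemma Dmin_le {N : ℕ} (x : Fin N → Z3) (i j : Fin N) (hj : j ≠ i) :
    Dmin x i ≤ enormZ (x i - x j) :=
  csInf_le (Dmin_set_finite x i).bddBelow ⟨j, hj, rfl⟩

/-- If `i ∈ S` and the nearest neighbor of `i` lies outside `S`, then `DminP = Dmin`. -/
lemma DminP_eq_Dmin {N : ℕ} (x : Fin N → Z3) (S : Finset (Fin N)) (i j : Fin N)
    (hi : i ∈ S) (hjS : j ∉ S) (_hj : j ≠ i) (hD : Dmin x i = enormZ (x i - x j)) :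
    DminP x S i = Dmin x i := by
  refine le_antisymm ?_ ?_
  · calc DminP x S i ≤ enormZ (x i - x j) :=
          csInf_le (DminP_set_finite x S i).bddBelow ⟨j, hjS, rfl⟩
      _ = Dmin x i := hD.symm
  · refine le_csInf ⟨enormZ (x i - x j), j, hjS, rfl⟩ ?_
    rintro d ⟨m, hmS, rfl⟩
    exact Dmin_le x i m (fun h => hmS (h ▸ hi))

/-- helper: any binomial of `n+1` is at most twice the middle binomial of `n`. -/
lemma choose_succ_le_two_middle (n r : ℕ) :
    (n + 1).choose r ≤ 2 * n.choose (n / 2) := by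
  have hpos : 1 ≤ n.choose (n / 2) := Nat.choose_pos (Nat.div_le_self n 2)
  rcases r with _ | m
  · simpa using by omega
  · rw [Nat.choose_succ_succ]
    simp only [Nat.succ_eq_add_one]
    have h1 : n.choose m ≤ n.choose (n / 2) := Nat.choose_le_middle m n
    have h2 : n.choose (m + 1) ≤ n.choose (n / 2) := Nat.choose_le_middle (m + 1) n
    omega

/-- binomial bound: `C(n+2, (n+2)/2) ≤ 4 C(n, n/2)`. -/
lemma choose_middle_bound (n : ℕ) :
    (n + 2).choose ((n + 2) / 2) ≤ 4 * n.choose (n / 2) := by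
  have h2 : (n + 2) / 2 = n / 2 + 1 := by omega
  rw [h2, Nat.choose_succ_succ]
  simp only [Nat.succ_eq_add_one]
  have hA : (n + 1).choose (n / 2) ≤ 2 * n.choose (n / 2) :=
    choose_succ_le_two_middle n (n / 2)
  have hB : (n + 1).choose (n / 2 + 1) ≤ 2 * n.choose (n / 2) :=
    choose_succ_le_two_middle n (n / 2 + 1)
  omega

/-- **Partition averaging bound**: with `N₁ = ⌊N/2⌋` and partitions `P = (π₁, π₂)` of
`{1,…,N}` into sets of sizes `N₁` and `N₂ = N - N₁` (identified with the subsets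
`S = π₁` of size `N₁`),
`∑ᵢ f(Dᵢ) ≤ 4 (binom(N,N₁))⁻¹ ∑_P ∑_{i ∈ π₁} f(Dᵢᴾ)`. -/
theorem nearest_neighbor_partition_average (N : ℕ) (hN : 2 ≤ N)
    (x : Fin N → Z3) (f : ℝ → ℝ) (hf : ∀ t, 0 ≤ f t) :
    ∑ i, f (Dmin x i) ≤
      4 * ((N.choose (N/2) : ℝ))⁻¹ *
        ∑ S ∈ Finset.powersetCard (N/2) (Finset.univ : Finset (Fin N)),
          ∑ i ∈ S, f (DminP x S i) := by
  classical
  set k := N / 2 with hk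
  have hk1 : 1 ≤ k := by omega
  have hkN : k ≤ N := by omega
  -- choose nearest neighbors
  have hex : ∀ i : Fin N, ∃ j, j ≠ i ∧ Dmin x i = enormZ (x i - x j) :=
    Dmin_attained hN x
  choose j hjne hjD using hex
  set P := Finset.powersetCard k (Finset.univ : Finset (Fin N)) with hP
  -- cardinality of good partitions for a fixed i
  have hcard : ∀ i : Fin N,
      (P.filter (fun S => i ∈ S ∧ j i ∉ S)).card = (N - 2).choose (k - 1) := by
    intro i
    have hkey : (P.filter (fun S => i ∈ S ∧ j i ∉ S)).card =
        (Finset.powersetCard (k - 1)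
          ((Finset.univ.erase i).erase (j i))).card := by
      refine Finset.card_bij' (fun S _ => S.erase i) (fun T _ => insert i T)
        ?_ ?_ ?_ ?_
      · intro S hS
        simp only [Finset.mem_filter, hP, Finset.mem_powersetCard] at hS
        obtain ⟨⟨-, hScard⟩, hiS, hjS⟩ := hS
        rw [Finset.mem_powersetCard]
        constructor
        · intro a ha
          rw [Finset.mem_erase] at ha
          rw [Finset.mem_erase, Finset.mem_erase]
          refine ⟨fun h => hjS (h ▸ ha.2), ha.1, Finset.mem_univ a⟩
        · rw [Finset.card_erase_of_mem hiS, hScard]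
      · intro T hT
        rw [Finset.mem_powersetCard] at hT
        obtain ⟨hTsub, hTcard⟩ := hT
        have hiT : i ∉ T := fun h => by
          have h2 := (Finset.mem_erase.1 (hTsub h)).2
          exact (Finset.mem_erase.1 h2).1 rfl
        have hjT : j i ∉ insert i T := by
          rw [Finset.mem_insert]
          rintro (h | h)
          · exact hjne i h
          · exact (Finset.mem_erase.1 (hTsub h)).1 rfl
        simp only [Finset.mem_filter, hP, Finset.mem_powersetCard]
        refine ⟨⟨Finset.subset_univ _, ?_⟩, Finset.mem_insert_self i T, hjT⟩
        rw [Finset.card_insert_of_notMem hiT, hTcard]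
        omega
      · intro S hS
        simp only [Finset.mem_filter] at hS
        exact Finset.insert_erase hS.2.1
      · intro T hT
        rw [Finset.mem_powersetCard] at hT
        have hiT : i ∉ T := fun h => by
          have h2 := (Finset.mem_erase.1 (hT.1 h)).2
          exact (Finset.mem_erase.1 h2).1 rfl
        exact Finset.erase_insert hiT
    rw [hkey, Finset.card_powersetCard]
    congr 1
    rw [Finset.card_erase_of_mem (Finset.mem_erase.2 ⟨hjne i, Finset.mem_univ _⟩),
      Finset.card_erase_of_mem (Finset.mem_univ i), Finset.card_univ, Fintype.card_fin]
    omega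
  -- key lower bound on the double sum
  have hmain : ((N - 2).choose (k - 1) : ℝ) * ∑ i, f (Dmin x i) ≤
      ∑ S ∈ P, ∑ i ∈ S, f (DminP x S i) := by
    calc ((N - 2).choose (k - 1) : ℝ) * ∑ i, f (Dmin x i)
        = ∑ i, ((P.filter (fun S => i ∈ S ∧ j i ∉ S)).card : ℝ) * f (Dmin x i) := by
          rw [Finset.mul_sum]
          exact Finset.sum_congr rfl (fun i _ => by rw [hcard i])
      _ = ∑ i, ∑ S ∈ P, (if i ∈ S ∧ j i ∉ S then f (Dmin x i) else 0) := by
          refine Finset.sum_congr rfl (fun i _ => ?_)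
          rw [← Finset.sum_filter, Finset.sum_const, nsmul_eq_mul]
      _ = ∑ S ∈ P, ∑ i, (if i ∈ S ∧ j i ∉ S then f (Dmin x i) else 0) :=
          Finset.sum_comm
      _ ≤ ∑ S ∈ P, ∑ i ∈ S, f (DminP x S i) := by
          refine Finset.sum_le_sum (fun S hS => ?_)
          have hSsub : ∀ {i}, i ∈ S → i ∈ (Finset.univ : Finset (Fin N)) :=
            fun _ => Finset.mem_univ _
          calc ∑ i, (if i ∈ S ∧ j i ∉ S then f (Dmin x i) else 0)
              = ∑ i ∈ Finset.univ.filter (fun i => i ∈ S ∧ j i ∉ S), f (Dmin x i) :=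
                (Finset.sum_filter _ _).symm
            _ = ∑ i ∈ Finset.univ.filter (fun i => i ∈ S ∧ j i ∉ S),
                  f (DminP x S i) := by
                refine Finset.sum_congr rfl (fun i hi => ?_)
                rw [Finset.mem_filter] at hi
                rw [DminP_eq_Dmin x S i (j i) hi.2.1 hi.2.2 (hjne i) (hjD i)]
            _ ≤ ∑ i ∈ S, f (DminP x S i) := by
                refine Finset.sum_le_sum_of_subset_of_nonneg ?_
                  (fun i _ _ => hf _)
                intro i hi
                rw [Finset.mem_filter] at hi
                exact hi.2.1
  -- conclude
  have hch_pos : 0 < N.choose k := Nat.choose_pos hkN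
  have hch_le : N.choose k ≤ 4 * (N - 2).choose (k - 1) := by
    have := choose_middle_bound (N - 2)
    have hN2 : N - 2 + 2 = N := by omega
    have hdiv2 : (N - 2) / 2 = k - 1 := by omega
    rw [hN2] at this
    rwa [← hk, hdiv2] at this
  have hsum_nonneg : 0 ≤ ∑ i, f (Dmin x i) :=
    Finset.sum_nonneg (fun i _ => hf _)
  have hpos : (0 : ℝ) < (N.choose k : ℝ) := by exact_mod_cast hch_pos
  rw [mul_comm (4 : ℝ) _, mul_assoc, ← div_eq_inv_mul, le_div_iff₀ hpos]
  calc (∑ i, f (Dmin x i)) * (N.choose k : ℝ)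
      ≤ (∑ i, f (Dmin x i)) * (4 * (N - 2).choose (k - 1) : ℝ) := by
        apply mul_le_mul_of_nonneg_left _ hsum_nonneg
        exact_mod_cast hch_le
    _ = 4 * (((N - 2).choose (k - 1) : ℝ) * ∑ i, f (Dmin x i)) := by ring
    _ ≤ 4 * ∑ S ∈ P, ∑ i ∈ S, f (DminP x S i) := by
        apply mul_le_mul_of_nonneg_left hmain (by norm_num)
end
end

section
/- There exist constants C > 0 and ρ_0 > 0 such that for all 0 < ρ ≤ ρ_0: |e(ρ) − (3/5)(6π²)^{2/3} ρ^{5/3}| ≤ C ρ^{7/3}. Consequently e_0(ρ_u, ρ_d) = (3/5)(6π²)^{2/3}(ρ_u^{5/3} + ρ_d^{5/3}) + O(ρ^{7/3}) for ρ = ρ_u + ρ_d small. -/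
open scoped BigOperators

noncomputable section

def cube3 : Set (Fin 3 → ℝ) := Set.Icc (fun _ => -Real.pi) (fun _ => Real.pi)

/-- The lattice dispersion relation `E(p) = 2 ∑ᵢ (1 - cos pⁱ)`. -/
def Edisp (p : Fin 3 → ℝ) : ℝ := 2 * ∑ i, (1 - Real.cos (p i))

/-- The Fermi energy `E_f(ρ)`, determined by `(2π)⁻³ vol{p ∈ [-π,π]³ : E(p) ≤ E_f(ρ)} = ρ`. -/
def fermiE (ρ : ℝ) : ℝ :=
  sInf {e : ℝ | ρ ≤ (MeasureTheory.volume {p ∈ cube3 | Edisp p ≤ e}).toReal / (2*Real.pi)^3}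

/-- The ground state energy per unit volume `e(ρ)` of the ideal lattice Fermi gas. -/
def eFree (ρ : ℝ) : ℝ :=
  (∫ p in {p ∈ cube3 | Edisp p ≤ fermiE ρ}, Edisp p) / (2*Real.pi)^3

def e0 (ρu ρd : ℝ) : ℝ := eFree ρu + eFree ρd

open Real MeasureTheory


lemma gamma_calc : (2 * Real.Gamma ((3:ℝ)/2)) ^ 3 / Real.Gamma ((5:ℝ)/2) = (4/3) * π := by
  have h3 : Real.Gamma ((3:ℝ)/2) = (1/2) * Real.Gamma (1/2) := by
    rw [show (3:ℝ)/2 = 1/2 + 1 by norm_num]; exact Real.Gamma_add_one (by norm_num)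
  have h5 : Real.Gamma ((5:ℝ)/2) = (3/2) * Real.Gamma ((3:ℝ)/2) := by
    rw [show (5:ℝ)/2 = 3/2 + 1 by norm_num]; exact Real.Gamma_add_one (by norm_num)
  rw [h5, h3, Real.Gamma_one_half_eq]
  have hπ : (0:ℝ) ≤ π := Real.pi_pos.le
  have hs : Real.sqrt π > 0 := Real.sqrt_pos.mpr Real.pi_pos
  field_simp
  nlinarith [Real.sq_sqrt hπ, hs]

lemma ball_vol (a : ℝ) (ha : 0 ≤ a) :
    volume {x : Fin 3 → ℝ | ∑ i, (x i)^2 ≤ a} = ENNReal.ofReal ((4/3) * π * a ^ ((3:ℝ)/2)) := by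
  have h2 : (1:ℝ) ≤ 2 := one_le_two
  have key := MeasureTheory.volume_sum_rpow_le (ι := Fin 3) h2 (Real.sqrt a)
  have hset : {x : Fin 3 → ℝ | (∑ i, |x i| ^ (2:ℝ)) ^ ((1:ℝ)/2) ≤ Real.sqrt a}
      = {x : Fin 3 → ℝ | ∑ i, (x i)^2 ≤ a} := by
    ext x
    have hsum : (∑ i, |x i| ^ (2:ℝ)) = ∑ i, (x i)^2 := by
      refine Finset.sum_congr rfl fun i _ => ?_
      rw [show ((2:ℝ)) = ((2:ℕ):ℝ) by norm_num, Real.rpow_natCast, sq_abs]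
    have hnn : (0:ℝ) ≤ ∑ i, (x i)^2 := Finset.sum_nonneg fun i _ => sq_nonneg _
    simp only [Set.mem_setOf_eq, hsum, ← Real.sqrt_eq_rpow]
    exact Real.sqrt_le_sqrt_iff ha
  rw [hset] at key
  rw [key]
  have hcard : Fintype.card (Fin 3) = 3 := by simp
  rw [hcard]
  norm_num
  rw [gamma_calc]
  rw [← ENNReal.ofReal_pow (Real.sqrt_nonneg a), ← ENNReal.ofReal_mul (by positivity)]
  congr 1
  have : Real.sqrt a ^ 3 = a ^ ((3:ℝ)/2) := by
    rw [Real.sqrt_eq_rpow, ← Real.rpow_natCast (a ^ ((1:ℝ)/2)) 3, ← Real.rpow_mul ha]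
    norm_num
  rw [this]; ring

lemma ball_vol_lt (a : ℝ) (ha : 0 ≤ a) :
    volume {x : Fin 3 → ℝ | ∑ i, (x i)^2 < a} = ENNReal.ofReal ((4/3) * π * a ^ ((3:ℝ)/2)) := by
  have h2 : (1:ℝ) ≤ 2 := one_le_two
  have key := MeasureTheory.volume_sum_rpow_lt (ι := Fin 3) h2 (Real.sqrt a)
  have hset : {x : Fin 3 → ℝ | (∑ i, |x i| ^ (2:ℝ)) ^ ((1:ℝ)/2) < Real.sqrt a}
      = {x : Fin 3 → ℝ | ∑ i, (x i)^2 < a} := by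
    ext x
    have hsum : (∑ i, |x i| ^ (2:ℝ)) = ∑ i, (x i)^2 := by
      refine Finset.sum_congr rfl fun i _ => ?_
      rw [show ((2:ℝ)) = ((2:ℕ):ℝ) by norm_num, Real.rpow_natCast, sq_abs]
    have hnn : (0:ℝ) ≤ ∑ i, (x i)^2 := Finset.sum_nonneg fun i _ => sq_nonneg _
    simp only [Set.mem_setOf_eq, hsum, ← Real.sqrt_eq_rpow]
    constructor
    · intro h
      have := Real.sq_sqrt ha
      nlinarith [Real.sq_sqrt hnn, Real.sqrt_nonneg (∑ i, (x i)^2), Real.sqrt_nonneg a]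
    · intro h
      exact (Real.sqrt_lt_sqrt hnn h)
  rw [hset] at key
  rw [key]
  have hcard : Fintype.card (Fin 3) = 3 := by simp
  rw [hcard]
  norm_num
  rw [gamma_calc]
  rw [← ENNReal.ofReal_pow (Real.sqrt_nonneg a), ← ENNReal.ofReal_mul (by positivity)]
  congr 1
  have : Real.sqrt a ^ 3 = a ^ ((3:ℝ)/2) := by
    rw [Real.sqrt_eq_rpow, ← Real.rpow_natCast (a ^ ((1:ℝ)/2)) 3, ← Real.rpow_mul ha]
    norm_num
  rw [this]; ring

lemma one_sub_cos_eq (x : ℝ) : 1 - Real.cos x = 2 * Real.sin (x/2) ^ 2 := by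
  have := Real.cos_two_mul' (x/2)
  have h2 : 2 * (x/2) = x := by ring
  rw [h2] at this
  have hsc := Real.sin_sq_add_cos_sq (x/2)
  nlinarith

lemma one_sub_cos_le (x : ℝ) : 1 - Real.cos x ≤ x^2 / 2 := by
  rw [one_sub_cos_eq]
  have := Real.sin_sq_le_sq (x := x/2)
  nlinarith

lemma one_sub_cos_ge (x : ℝ) (hx : |x| ≤ 2) : x^2/2 - x^4/16 ≤ 1 - Real.cos x := by
  rw [one_sub_cos_eq]
  have key : ∀ y : ℝ, 0 < y → y ≤ 2 → y^2/2 - y^4/16 ≤ 2 * Real.sin (y/2) ^ 2 := by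
    intro y hy0 hy2
    have hs : y/2 - (y/2)^3/4 < Real.sin (y/2) := by
      have := Real.sin_gt_sub_cube (x := y/2) (by positivity)
      nlinarith [pow_pos (show (0:ℝ) < y/2 by positivity) 3]
    have hs0 : 0 ≤ y/2 - (y/2)^3/4 := by nlinarith [mul_nonneg hy0.le (sq_nonneg y)]
    have hsq2 : (y/2 - (y/2)^3/4)^2 ≤ Real.sin (y/2) ^ 2 := by
      have := mul_self_le_mul_self hs0 hs.le
      nlinarith
    nlinarith [sq_nonneg y, sq_nonneg (y^2), mul_nonneg (sq_nonneg y) (sq_nonneg (y^2))]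
  rcases eq_or_ne x 0 with rfl | hx0
  · norm_num
  · have habs : 0 < |x| := abs_pos.mpr hx0
    have := key |x| habs hx
    have hsq : Real.sin (|x|/2) ^ 2 = Real.sin (x/2) ^ 2 := by
      rcases abs_choice x with h | h
      · rw [h]
      · rw [h]; rw [show -x/2 = -(x/2) by ring, Real.sin_neg]; ring
    rw [hsq, sq_abs, show |x|^4 = x^4 by rw [← abs_pow]; exact abs_of_nonneg (by positivity)] at this
    exact this

lemma Edisp_nonneg (p : Fin 3 → ℝ) : 0 ≤ Edisp p := by
  unfold Edisp
  have h : ∀ i ∈ Finset.univ, (0:ℝ) ≤ 1 - Real.cos (p i) := fun i _ => by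
    have := Real.cos_le_one (p i); linarith
  have := Finset.sum_nonneg h
  linarith

lemma Edisp_le_sum (p : Fin 3 → ℝ) : Edisp p ≤ ∑ i, (p i)^2 := by
  unfold Edisp
  rw [Finset.mul_sum]
  refine Finset.sum_le_sum fun i _ => ?_
  have := one_sub_cos_le (p i); linarith

lemma mem_cube_of_sum_sq {x : Fin 3 → ℝ} (h : ∑ i, (x i)^2 ≤ 1) : x ∈ cube3 := by
  have key : ∀ i, |x i| ≤ 1 := by
    intro i
    have hi : (x i)^2 ≤ 1 :=
      le_trans (Finset.single_le_sum (fun j _ => sq_nonneg (x j)) (Finset.mem_univ i)) h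
    have h2 : x i * x i ≤ 1 := by nlinarith
    exact abs_le_one_iff_mul_self_le_one.mpr h2
  have hpi := Real.pi_gt_three
  constructor <;> intro i <;> have := abs_le.mp (key i)
  · show -Real.pi ≤ x i; linarith [this.1]
  · show x i ≤ Real.pi; linarith [this.2]

lemma ball_subset_S {e : ℝ} (he1 : e ≤ 1) :
    {x : Fin 3 → ℝ | ∑ i, (x i)^2 ≤ e} ⊆ {p ∈ cube3 | Edisp p ≤ e} := by
  intro x hx
  simp only [Set.mem_setOf_eq] at hx ⊢
  exact ⟨mem_cube_of_sum_sq (hx.trans he1), (Edisp_le_sum x).trans hx⟩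

lemma ballo_subset_S {t : ℝ} (ht1 : t ≤ 1) :
    {x : Fin 3 → ℝ | ∑ i, (x i)^2 < t} ⊆ {p ∈ cube3 | Edisp p < t} := by
  intro x hx
  simp only [Set.mem_setOf_eq] at hx ⊢
  exact ⟨mem_cube_of_sum_sq (hx.le.trans ht1), lt_of_le_of_lt (Edisp_le_sum x) hx⟩

lemma S_subset_ball {e : ℝ} (he0 : 0 ≤ e) (he1 : e ≤ 1) :
    {p ∈ cube3 | Edisp p ≤ e} ⊆ {x : Fin 3 → ℝ | ∑ i, (x i)^2 ≤ e * (1 + e/2)} := by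
  rintro x ⟨hc, hE⟩
  simp only [Set.mem_setOf_eq] at hE ⊢
  -- each coordinate is at most π/3 in absolute value
  have hterm : ∀ i, 1 - Real.cos (x i) ≤ e / 2 := by
    intro i
    have h1 : (1 - Real.cos (x i)) ≤ ∑ j, (1 - Real.cos (x j)) := by
      refine Finset.single_le_sum (f := fun j => 1 - Real.cos (x j)) (fun j _ => ?_) (Finset.mem_univ i)
      have := Real.cos_le_one (x j); linarith
    unfold Edisp at hE; linarith
  have habs : ∀ i, |x i| ≤ Real.pi / 3 := by
    intro i
    by_contra hgt
    push_neg at hgt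
    have hxpi : |x i| ≤ Real.pi := by
      have h1 := hc.1 i
      have h2 := hc.2 i
      exact abs_le.mpr ⟨h1, h2⟩
    have hmono := Real.strictAntiOn_cos
      (Set.mem_Icc.mpr ⟨by positivity, by linarith [Real.pi_pos]⟩)
      (Set.mem_Icc.mpr ⟨abs_nonneg _, hxpi⟩) hgt
    rw [Real.cos_pi_div_three, Real.cos_abs] at hmono
    have := hterm i
    linarith
  -- lower bound on Edisp
  have hlow : ∀ i, (x i)^2/2 - (x i)^4/16 ≤ 1 - Real.cos (x i) := by
    intro i
    refine one_sub_cos_ge (x i) ?_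
    have := habs i
    have := Real.pi_lt_d2
    linarith
  set s := ∑ i, (x i)^2 with hs
  have hsum4 : ∑ i, (x i)^4 ≤ s^2 := by
    have := Finset.sum_sq_le_sq_sum_of_nonneg (s := Finset.univ)
      (f := fun i => (x i)^2) (fun i _ => sq_nonneg (x i))
    calc ∑ i, (x i)^4 = ∑ i, ((x i)^2)^2 := by
          refine Finset.sum_congr rfl fun i _ => by ring
      _ ≤ (∑ i, (x i)^2)^2 := this
  have hEs : s/2 - s^2/16 ≤ e/2 := by
    have h1 : ∑ i, ((x i)^2/2 - (x i)^4/16) ≤ ∑ i, (1 - Real.cos (x i)) :=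
      Finset.sum_le_sum (fun i _ => hlow i)
    have h2 : ∑ i, ((x i)^2/2 - (x i)^4/16) = s/2 - (∑ i, (x i)^4)/16 := by
      rw [Finset.sum_sub_distrib, ← Finset.sum_div, ← Finset.sum_div]
    unfold Edisp at hE
    have h3 : ∑ i, (1 - Real.cos (x i)) ≤ e/2 := by linarith
    rw [h2] at h1
    have : s/2 - s^2/16 ≤ s/2 - (∑ i, (x i)^4)/16 := by linarith
    linarith
  have hs4 : s ≤ 4 := by
    have : ∀ i, (x i)^2 ≤ (Real.pi/3)^2 := fun i => by
      have h := habs i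
      have := sq_abs (x i)
      nlinarith [abs_nonneg (x i)]
    have hb := Real.pi_lt_d2
    have h3 : s ≤ 3 * (Real.pi/3)^2 := by
      rw [hs, Fin.sum_univ_three]
      linarith [this 0, this 1, this 2]
    nlinarith [Real.pi_gt_three]
  have hs0 : 0 ≤ s := Finset.sum_nonneg fun i _ => sq_nonneg _
  -- conclude s ≤ e (1 + e/2)
  nlinarith [sq_nonneg (s - 2*e), sq_nonneg s]

lemma Edisp_continuous : Continuous Edisp := by
  unfold Edisp
  exact continuous_const.mul (continuous_finset_sum _ fun i _ =>
    continuous_const.sub (Real.continuous_cos.comp (continuous_apply i)))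

lemma S_compact (e : ℝ) : IsCompact {p ∈ cube3 | Edisp p ≤ e} := by
  have h1 : IsCompact cube3 := isCompact_Icc
  have h2 : IsClosed {p : Fin 3 → ℝ | Edisp p ≤ e} :=
    isClosed_le Edisp_continuous continuous_const
  exact h1.inter_right h2

lemma S_measurable (e : ℝ) : MeasurableSet {p ∈ cube3 | Edisp p ≤ e} :=
  (S_compact e).isClosed.measurableSet

lemma V_lt_top (e : ℝ) : volume {p ∈ cube3 | Edisp p ≤ e} < ⊤ :=
  (S_compact e).measure_lt_top

lemma Vr_lower {e : ℝ} (he0 : 0 ≤ e) (he1 : e ≤ 1) :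
    (4/3) * π * e ^ ((3:ℝ)/2) ≤ (volume {p ∈ cube3 | Edisp p ≤ e}).toReal := by
  have h := measure_mono (μ := volume) (ball_subset_S (e := e) he1)
  rw [ball_vol e he0] at h
  exact (ENNReal.ofReal_le_iff_le_toReal (V_lt_top e).ne).mp h

lemma Vr_upper {e : ℝ} (he0 : 0 ≤ e) (he1 : e ≤ 1) :
    (volume {p ∈ cube3 | Edisp p ≤ e}).toReal ≤ (4/3) * π * (e * (1 + e/2)) ^ ((3:ℝ)/2) := by
  have h := measure_mono (μ := volume) (S_subset_ball (e := e) he0 he1)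
  rw [ball_vol (e * (1 + e/2)) (by nlinarith)] at h
  exact ENNReal.toReal_le_of_le_ofReal (by positivity) h

lemma mem_fermiSet_nonneg {ρ e : ℝ} (hρ : 0 < ρ)
    (he : ρ ≤ (volume {p ∈ cube3 | Edisp p ≤ e}).toReal / (2*Real.pi)^3) : 0 ≤ e := by
  by_contra hneg
  push_neg at hneg
  have hempty : {p ∈ cube3 | Edisp p ≤ e} = ∅ := by
    ext p
    simp only [Set.mem_setOf_eq, Set.mem_empty_iff_false, iff_false, not_and]
    intro _
    have := Edisp_nonneg p
    linarith
  rw [hempty] at he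
  simp only [measure_empty, ENNReal.toReal_zero, zero_div] at he
  linarith

lemma mu_rpow_32 {ρ : ℝ} (hρ : 0 < ρ) :
    ((6*π^2*ρ) ^ ((2:ℝ)/3)) ^ ((3:ℝ)/2) = 6*π^2*ρ := by
  have h : (0:ℝ) ≤ 6*π^2*ρ := by positivity
  rw [← Real.rpow_mul h]
  norm_num

lemma mu_mem_fermiSet {ρ : ℝ} (hρ : 0 < ρ) (hμ : (6*π^2*ρ) ^ ((2:ℝ)/3) ≤ 1) :
    ρ ≤ (volume {p ∈ cube3 | Edisp p ≤ (6*π^2*ρ) ^ ((2:ℝ)/3)}).toReal / (2*Real.pi)^3 := by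
  set μ := (6*π^2*ρ) ^ ((2:ℝ)/3) with hμdef
  have hμ0 : 0 ≤ μ := Real.rpow_nonneg (by positivity) _
  have hV := Vr_lower hμ0 hμ
  rw [mu_rpow_32 hρ] at hV
  rw [le_div_iff₀ (by positivity)]
  calc ρ * (2*π)^3 = (4/3) * π * (6*π^2*ρ) := by ring
    _ ≤ _ := hV

lemma fermi_le {ρ : ℝ} (hρ : 0 < ρ) (hμ : (6*π^2*ρ) ^ ((2:ℝ)/3) ≤ 1) :
    fermiE ρ ≤ (6*π^2*ρ) ^ ((2:ℝ)/3) := by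
  apply csInf_le
  · exact ⟨0, fun e he => mem_fermiSet_nonneg hρ he⟩
  · exact mu_mem_fermiSet hρ hμ

lemma fermi_nonneg {ρ : ℝ} (hρ : 0 < ρ) (hμ : (6*π^2*ρ) ^ ((2:ℝ)/3) ≤ 1) : 0 ≤ fermiE ρ := by
  unfold fermiE
  exact le_csInf ⟨_, mu_mem_fermiSet hρ hμ⟩ fun e he => mem_fermiSet_nonneg hρ he

lemma fermi_ge {ρ : ℝ} (hρ : 0 < ρ) (hμ : (6*π^2*ρ) ^ ((2:ℝ)/3) ≤ 1) :
    (6*π^2*ρ) ^ ((2:ℝ)/3) * (1 - (6*π^2*ρ) ^ ((2:ℝ)/3)) ≤ fermiE ρ := by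
  set μ := (6*π^2*ρ) ^ ((2:ℝ)/3) with hμdef
  have hμ0 : 0 ≤ μ := Real.rpow_nonneg (by positivity) _
  unfold fermiE
  refine le_csInf ⟨_, mu_mem_fermiSet hρ hμ⟩ fun e he => ?_
  simp only [Set.mem_setOf_eq] at he
  have he0 : 0 ≤ e := mem_fermiSet_nonneg hρ he
  rcases le_or_gt e 1 with he1 | he1
  · -- e ≤ 1 : use upper volume bound
    have hV := Vr_upper he0 he1
    have hee : ρ * (2*π)^3 ≤ (volume {p ∈ cube3 | Edisp p ≤ e}).toReal := by
      rw [le_div_iff₀ (by positivity : (0:ℝ) < (2*π)^3)] at he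
      exact he
    have hchain : (4/3) * π * (6*π^2*ρ) ≤ (4/3) * π * (e * (1 + e/2)) ^ ((3:ℝ)/2) := by
      calc (4/3) * π * (6*π^2*ρ) = ρ * (2*π)^3 := by ring
        _ ≤ _ := hee.trans hV
    have h6 : (6*π^2*ρ) ≤ (e * (1 + e/2)) ^ ((3:ℝ)/2) := by
      have hπ : (0:ℝ) < π := Real.pi_pos
      nlinarith [Real.rpow_nonneg (show (0:ℝ) ≤ e * (1+e/2) by nlinarith) ((3:ℝ)/2)]
    -- take 2/3 power
    have hμle : μ ≤ e * (1 + e/2) := by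
      have h1 : (6*π^2*ρ) ^ ((2:ℝ)/3) ≤ ((e * (1 + e/2)) ^ ((3:ℝ)/2)) ^ ((2:ℝ)/3) :=
        Real.rpow_le_rpow (by positivity) h6 (by norm_num)
      rwa [← Real.rpow_mul (by nlinarith), show ((3:ℝ)/2) * ((2:ℝ)/3) = 1 by norm_num,
        Real.rpow_one] at h1
    rcases le_or_gt μ e with h | h
    · nlinarith
    · nlinarith
  · nlinarith

lemma rpow_32_le {a b : ℝ} (ha : 0 ≤ a) (hb : 0 ≤ b) (h : a^3 ≤ b^2) : a ^ ((3:ℝ)/2) ≤ b := by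
  have h1 : a ^ ((3:ℝ)/2) = Real.sqrt (a^3) := by
    rw [Real.sqrt_eq_rpow, ← Real.rpow_natCast a 3, ← Real.rpow_mul ha]
    norm_num
  rw [h1]
  calc Real.sqrt (a^3) ≤ Real.sqrt (b^2) := Real.sqrt_le_sqrt h
    _ = b := Real.sqrt_sq hb

lemma onePlusHalf_rpow {u : ℝ} (h0 : 0 ≤ u) (h1 : u ≤ 1) : (1+u/2) ^ ((3:ℝ)/2) ≤ 1 + u := by
  have hu3 : u^3 ≤ u := by
    nlinarith [mul_nonneg (mul_nonneg h0 (sub_nonneg.mpr h1)) (show (0:ℝ) ≤ 1+u by linarith)]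
  exact rpow_32_le (by linarith) (by linarith) (by nlinarith)

lemma Vr_upper' {e : ℝ} (he0 : 0 ≤ e) (he1 : e ≤ 1) :
    (volume {p ∈ cube3 | Edisp p ≤ e}).toReal ≤ (4/3) * π * ((1+e) * e ^ ((3:ℝ)/2)) := by
  refine (Vr_upper he0 he1).trans ?_
  have h1 : (e * (1 + e/2)) ^ ((3:ℝ)/2) = e ^ ((3:ℝ)/2) * (1+e/2) ^ ((3:ℝ)/2) :=
    Real.mul_rpow he0 (by linarith)
  have h2 := onePlusHalf_rpow he0 he1
  have h3 : 0 ≤ e ^ ((3:ℝ)/2) := Real.rpow_nonneg he0 _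
  have hπ := Real.pi_pos
  rw [h1]
  have h4 := mul_le_mul_of_nonneg_left h2 h3
  nlinarith [h4, hπ]

lemma J_bound {e : ℝ} (he0 : 0 ≤ e) (he1 : e ≤ 1) :
    |(∫ p in {p ∈ cube3 | Edisp p ≤ e}, Edisp p) - (3/5) * ((4/3)*π) * e ^ ((5:ℝ)/2)|
      ≤ (4/3) * π * e ^ ((7:ℝ)/2) := by
  rcases he0.eq_or_lt with rfl | he0'
  · have hzero : (∫ p in {p ∈ cube3 | Edisp p ≤ (0:ℝ)}, Edisp p) = 0 := by
      rw [setIntegral_congr_fun (S_measurable 0)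
        (fun x hx => le_antisymm hx.2 (Edisp_nonneg x))]
      simp
    rw [hzero, Real.zero_rpow (by norm_num), Real.zero_rpow (by norm_num)]
    simp
  set c : ℝ := (4/3)*π with hc
  have hcpos : 0 < c := by have := Real.pi_pos; positivity
  set S := {p ∈ cube3 | Edisp p ≤ e} with hS
  have hSm : MeasurableSet S := S_measurable e
  have hVfin := V_lt_top e
  set Vr := (volume S).toReal with hVr
  have hInt : IntegrableOn Edisp S := Edisp_continuous.continuousOn.integrableOn_compact (S_compact e)
  have hnn : 0 ≤ᵐ[volume.restrict S] Edisp := Filter.Eventually.of_forall Edisp_nonneg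
  have hbdd : Edisp ≤ᵐ[volume.restrict S] (fun _ => e) := by
    rw [Filter.EventuallyLE, MeasureTheory.ae_restrict_iff' hSm]
    exact Filter.Eventually.of_forall fun x hx => hx.2
  have hlc := hInt.integral_eq_integral_Ioc_meas_le hnn hbdd
  set w : ℝ → ℝ := fun t => (volume (S ∩ {p | Edisp p < t})).toReal with hw
  have hwfin : ∀ t : ℝ, volume (S ∩ {p | Edisp p < t}) ≠ ⊤ :=
    fun t => (lt_of_le_of_lt (measure_mono Set.inter_subset_left) hVfin).ne
  have hwkey : ∀ t ∈ Set.Ioc (0:ℝ) e,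
      ((volume.restrict S) {a | t ≤ Edisp a}).toReal = Vr - w t := by
    intro t _
    have hmeas : MeasurableSet {a : Fin 3 → ℝ | t ≤ Edisp a} :=
      (isClosed_le continuous_const Edisp_continuous).measurableSet
    rw [Measure.restrict_apply hmeas]
    have hseteq : {a | t ≤ Edisp a} ∩ S = S \ (S ∩ {p | Edisp p < t}) := by
      ext x
      simp only [Set.mem_inter_iff, Set.mem_diff, Set.mem_setOf_eq]
      constructor
      · rintro ⟨h1, h2⟩; exact ⟨h2, fun hh => absurd h1 (not_le.mpr hh.2)⟩
      · rintro ⟨h1, h2⟩; exact ⟨not_lt.mp fun hlt => h2 ⟨h1, hlt⟩, h1⟩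
    rw [hseteq, measure_diff Set.inter_subset_left
      (hSm.inter (isOpen_lt Edisp_continuous continuous_const).measurableSet).nullMeasurableSet
      (hwfin t),
      ENNReal.toReal_sub_of_le (measure_mono Set.inter_subset_left) hVfin.ne]
  have hwlow : ∀ t ∈ Set.Ioc (0:ℝ) e, c * t ^ ((3:ℝ)/2) ≤ w t := by
    intro t ht
    have hsub : {x : Fin 3 → ℝ | ∑ i, (x i)^2 < t} ⊆ S ∩ {p | Edisp p < t} := by
      intro x hx
      obtain ⟨hcube, hlt⟩ := ballo_subset_S (le_trans ht.2 he1) hx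
      exact ⟨⟨hcube, le_of_lt (lt_of_lt_of_le hlt ht.2)⟩, hlt⟩
    have h := measure_mono (μ := volume) hsub
    rw [ball_vol_lt t ht.1.le] at h
    exact (ENNReal.ofReal_le_iff_le_toReal (hwfin t)).mp h
  have hwhigh : ∀ t ∈ Set.Ioc (0:ℝ) e, w t ≤ c * ((1+e) * t ^ ((3:ℝ)/2)) := by
    intro t ht
    have hsub : S ∩ {p | Edisp p < t} ⊆ {p ∈ cube3 | Edisp p ≤ t} :=
      fun x hx => ⟨hx.1.1, hx.2.le⟩
    have h1 : w t ≤ (volume {p ∈ cube3 | Edisp p ≤ t}).toReal :=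
      ENNReal.toReal_mono (V_lt_top t).ne (measure_mono hsub)
    have h2 := Vr_upper' ht.1.le (le_trans ht.2 he1)
    have ht32 : (0:ℝ) ≤ t ^ ((3:ℝ)/2) := Real.rpow_nonneg ht.1.le _
    have h3 : (1+t) * t ^ ((3:ℝ)/2) ≤ (1+e) * t ^ ((3:ℝ)/2) := by nlinarith [ht.2]
    calc w t ≤ _ := h1
      _ ≤ c * ((1+t) * t ^ ((3:ℝ)/2)) := h2
      _ ≤ c * ((1+e) * t ^ ((3:ℝ)/2)) := by nlinarith
  have hmono_w : Monotone w := by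
    intro t1 t2 h12
    exact ENNReal.toReal_mono (hwfin t2)
      (measure_mono (Set.inter_subset_inter_right _ fun x hx => lt_of_lt_of_le hx h12))
  have hm_int : IntegrableOn (fun t => Vr - w t) (Set.Ioc 0 e) := by
    have hanti : AntitoneOn (fun t => Vr - w t) (Set.Icc (0:ℝ) e) := fun a _ b _ hab => by
      simp only
      linarith [hmono_w hab]
    exact (AntitoneOn.integrableOn_isCompact isCompact_Icc hanti).mono_set
      Set.Ioc_subset_Icc_self
  have hrpow_int : IntegrableOn (fun t : ℝ => t ^ ((3:ℝ)/2)) (Set.Ioc 0 e) := by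
    have h := intervalIntegral.intervalIntegrable_rpow' (a := 0) (b := e) (r := (3:ℝ)/2) (by norm_num)
    rwa [intervalIntegrable_iff, Set.uIoc_of_le he0] at h
  have hval : ∫ t in Set.Ioc (0:ℝ) e, t ^ ((3:ℝ)/2) = (2/5) * e ^ ((5:ℝ)/2) := by
    rw [← intervalIntegral.integral_of_le he0, integral_rpow (Or.inl (by norm_num)),
      Real.zero_rpow (by norm_num), show (3:ℝ)/2 + 1 = 5/2 by norm_num]
    ring
  have hioc : (volume (Set.Ioc (0:ℝ) e)) ≠ ⊤ := by
    rw [Real.volume_Ioc]; exact ENNReal.ofReal_ne_top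
  have hconst : ∫ _ in Set.Ioc (0:ℝ) e, Vr = e * Vr := by
    rw [setIntegral_const, Real.volume_real_Ioc_of_le he0, smul_eq_mul]
    ring
  have hconst_int : IntegrableOn (fun _ : ℝ => Vr) (Set.Ioc 0 e) :=
    integrableOn_const hioc
  have hlc2 : (∫ p in S, Edisp p) = ∫ t in Set.Ioc (0:ℝ) e, (Vr - w t) := by
    rw [hlc]
    exact setIntegral_congr_fun measurableSet_Ioc hwkey
  have hg2_int : IntegrableOn (fun t : ℝ => Vr - c * t ^ ((3:ℝ)/2)) (Set.Ioc 0 e) :=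
    hconst_int.sub (hrpow_int.const_mul c)
  have hg1_int : IntegrableOn (fun t : ℝ => Vr - c * (1+e) * t ^ ((3:ℝ)/2)) (Set.Ioc 0 e) :=
    hconst_int.sub (hrpow_int.const_mul (c * (1+e)))
  have hub : (∫ t in Set.Ioc (0:ℝ) e, (Vr - w t)) ≤ e * Vr - c * ((2/5) * e ^ ((5:ℝ)/2)) := by
    have hmono := setIntegral_mono_on hm_int hg2_int measurableSet_Ioc
      (fun t ht => by linarith [hwlow t ht])
    refine hmono.trans ?_
    rw [MeasureTheory.integral_sub hconst_int (hrpow_int.const_mul c),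
      hconst, MeasureTheory.integral_const_mul, hval]
  have hlb : e * Vr - c * (1+e) * ((2/5) * e ^ ((5:ℝ)/2)) ≤ ∫ t in Set.Ioc (0:ℝ) e, (Vr - w t) := by
    have hmono := setIntegral_mono_on hg1_int hm_int measurableSet_Ioc
      (fun t ht => by linarith [hwhigh t ht])
    refine le_trans ?_ hmono
    rw [MeasureTheory.integral_sub hconst_int (hrpow_int.const_mul (c*(1+e))),
      hconst, MeasureTheory.integral_const_mul, hval]
  -- power identities
  have hpow1 : e * e ^ ((3:ℝ)/2) = e ^ ((5:ℝ)/2) := by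
    rw [show (5:ℝ)/2 = 1 + 3/2 by norm_num, Real.rpow_add he0', Real.rpow_one]
  have hpow2 : e * e ^ ((5:ℝ)/2) = e ^ ((7:ℝ)/2) := by
    rw [show (7:ℝ)/2 = 1 + 5/2 by norm_num, Real.rpow_add he0', Real.rpow_one]
  have hVrlow := Vr_lower he0 he1
  have hVrhigh := Vr_upper' he0 he1
  rw [← hS, ← hVr] at hVrlow hVrhigh
  have he32 : (0:ℝ) ≤ e ^ ((3:ℝ)/2) := Real.rpow_nonneg he0 _
  have he52 : (0:ℝ) ≤ e ^ ((5:ℝ)/2) := Real.rpow_nonneg he0 _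
  have hEVr_low : c * e ^ ((5:ℝ)/2) ≤ e * Vr :=
    calc c * e ^ ((5:ℝ)/2) = e * ((4/3) * π * e ^ ((3:ℝ)/2)) := by rw [← hpow1]; ring
      _ ≤ e * Vr := mul_le_mul_of_nonneg_left hVrlow he0
  have hEVr_high : e * Vr ≤ c * e ^ ((5:ℝ)/2) + c * e ^ ((7:ℝ)/2) :=
    calc e * Vr ≤ e * ((4/3) * π * ((1+e) * e ^ ((3:ℝ)/2))) :=
        mul_le_mul_of_nonneg_left hVrhigh he0
      _ = c * e ^ ((5:ℝ)/2) + c * e ^ ((7:ℝ)/2) := by rw [← hpow2, ← hpow1]; ring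
  have hkey1 : c * (1+e) * ((2/5) * e ^ ((5:ℝ)/2))
      = (2/5) * (c * e ^ ((5:ℝ)/2)) + (2/5) * (c * e ^ ((7:ℝ)/2)) := by
    rw [← hpow2]; ring
  have hc52 : 0 ≤ c * e ^ ((7:ℝ)/2) :=
    mul_nonneg hcpos.le (Real.rpow_nonneg he0 _)
  rw [hlc2, abs_le]
  constructor
  · linarith [hlb, hEVr_low]
  · linarith [hub, hEVr_high]

lemma pow3_le_rpow52 {x : ℝ} (h0 : 0 ≤ x) (h1 : x ≤ 1) : x^3 ≤ x ^ ((5:ℝ)/2) := by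
  rcases h0.eq_or_lt with rfl | hx
  · rw [Real.zero_rpow (by norm_num)]; norm_num
  · have h := Real.rpow_le_rpow_of_exponent_ge hx h1 (show (5:ℝ)/2 ≤ (3:ℕ) by norm_num)
    rwa [Real.rpow_natCast] at h

set_option maxHeartbeats 1000000 in
lemma main1 {ρ : ℝ} (hρ : 0 < ρ) (hρ0 : ρ ≤ (6*π^2)⁻¹) :
    |eFree ρ - (3/5) * (6 * π^2) ^ ((2:ℝ)/3) * ρ ^ ((5:ℝ)/3)| ≤
      (6*π^2) ^ ((7:ℝ)/3) * ρ ^ ((7:ℝ)/3) := by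
  have hπ := Real.pi_pos
  have h6pos : (0:ℝ) < 6*π^2 := by positivity
  have hbase : 0 < 6*π^2*ρ := by positivity
  set μ := (6*π^2*ρ) ^ ((2:ℝ)/3) with hμdef
  have hμpos : 0 < μ := Real.rpow_pos_of_pos hbase _
  have hμ1 : μ ≤ 1 := by
    apply Real.rpow_le_one hbase.le ?_ (by norm_num)
    calc 6*π^2*ρ ≤ 6*π^2*(6*π^2)⁻¹ := by
          exact mul_le_mul_of_nonneg_left hρ0 h6pos.le
      _ = 1 := mul_inv_cancel₀ h6pos.ne'
  set Ef := fermiE ρ with hEfdef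
  have hEf0 : 0 ≤ Ef := fermi_nonneg hρ hμ1
  have hEfμ : Ef ≤ μ := fermi_le hρ hμ1
  have hEfl : μ * (1 - μ) ≤ Ef := fermi_ge hρ hμ1
  have hEf1 : Ef ≤ 1 := hEfμ.trans hμ1
  have hJ := J_bound hEf0 hEf1
  set c : ℝ := (4/3)*π with hc
  have hcpos : 0 < c := by positivity
  set X := ∫ p in {p ∈ cube3 | Edisp p ≤ Ef}, Edisp p with hX
  -- power facts
  have hμ52 : (0:ℝ) ≤ μ ^ ((5:ℝ)/2) := Real.rpow_nonneg hμpos.le _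
  have hEf72 : Ef ^ ((7:ℝ)/2) ≤ μ ^ ((7:ℝ)/2) := Real.rpow_le_rpow hEf0 hEfμ (by norm_num)
  have hμμ : μ * μ ^ ((5:ℝ)/2) = μ ^ ((7:ℝ)/2) := by
    rw [show (7:ℝ)/2 = 1 + 5/2 by norm_num, Real.rpow_add hμpos, Real.rpow_one]
  have hEf52 : μ ^ ((5:ℝ)/2) - 3 * μ ^ ((7:ℝ)/2) ≤ Ef ^ ((5:ℝ)/2) := by
    have h1 : (μ * (1-μ)) ^ ((5:ℝ)/2) ≤ Ef ^ ((5:ℝ)/2) :=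
      Real.rpow_le_rpow (by nlinarith) hEfl (by norm_num)
    have h2 : (μ * (1-μ)) ^ ((5:ℝ)/2) = μ ^ ((5:ℝ)/2) * (1-μ) ^ ((5:ℝ)/2) :=
      Real.mul_rpow hμpos.le (by linarith)
    have h3 : (1-μ)^3 ≤ (1-μ) ^ ((5:ℝ)/2) := pow3_le_rpow52 (by linarith) (by linarith)
    have h4 : 1 - 3*μ ≤ (1-μ)^3 := by nlinarith
    have h5 : μ ^ ((5:ℝ)/2) * (1 - 3*μ) ≤ μ ^ ((5:ℝ)/2) * (1-μ) ^ ((5:ℝ)/2) := by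
      apply mul_le_mul_of_nonneg_left (h4.trans h3) hμ52
    have h6 : μ ^ ((5:ℝ)/2) * (1 - 3*μ) = μ ^ ((5:ℝ)/2) - 3 * μ ^ ((7:ℝ)/2) := by
      rw [← hμμ]; ring
    linarith
  -- numerator bound
  have hnum : |X - (3/5) * c * μ ^ ((5:ℝ)/2)| ≤ 3 * c * μ ^ ((7:ℝ)/2) := by
    have h1 : |X - (3/5) * c * Ef ^ ((5:ℝ)/2)| ≤ c * Ef ^ ((7:ℝ)/2) := hJ
    have h2 : |(3/5) * c * Ef ^ ((5:ℝ)/2) - (3/5) * c * μ ^ ((5:ℝ)/2)|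
        ≤ (9/5) * c * μ ^ ((7:ℝ)/2) := by
      rw [abs_le]
      have hEfle : Ef ^ ((5:ℝ)/2) ≤ μ ^ ((5:ℝ)/2) := Real.rpow_le_rpow hEf0 hEfμ (by norm_num)
      constructor <;> nlinarith
    calc |X - (3/5) * c * μ ^ ((5:ℝ)/2)|
        ≤ |X - (3/5) * c * Ef ^ ((5:ℝ)/2)| +
          |(3/5) * c * Ef ^ ((5:ℝ)/2) - (3/5) * c * μ ^ ((5:ℝ)/2)| := by
          have := abs_sub_le X ((3/5) * c * Ef ^ ((5:ℝ)/2)) ((3/5) * c * μ ^ ((5:ℝ)/2))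
          linarith
      _ ≤ c * Ef ^ ((7:ℝ)/2) + (9/5) * c * μ ^ ((7:ℝ)/2) := add_le_add h1 h2
      _ ≤ 3 * c * μ ^ ((7:ℝ)/2) := by
          have := mul_le_mul_of_nonneg_left hEf72 hcpos.le
          have h0 : 0 ≤ c * μ ^ ((7:ℝ)/2) := mul_nonneg hcpos.le (Real.rpow_nonneg hμpos.le _)
          linarith
  -- identify target constant
  have hT : (3/5) * (6 * π^2) ^ ((2:ℝ)/3) * ρ ^ ((5:ℝ)/3)
      = ((3/5) * c * μ ^ ((5:ℝ)/2)) / (2*π)^3 := by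
    have hμ52eq : μ ^ ((5:ℝ)/2) = (6*π^2) ^ ((5:ℝ)/3) * ρ ^ ((5:ℝ)/3) := by
      rw [hμdef, ← Real.rpow_mul hbase.le, show (2:ℝ)/3 * (5/2) = 5/3 by norm_num,
        Real.mul_rpow h6pos.le hρ.le]
    have hsplit : (6*π^2) ^ ((5:ℝ)/3) = (6*π^2) ^ ((2:ℝ)/3) * (6*π^2) := by
      rw [show (5:ℝ)/3 = 2/3 + 1 by norm_num, Real.rpow_add h6pos, Real.rpow_one]
    rw [hμ52eq, hsplit, hc]
    field_simp
    ring
  have hμ72eq : μ ^ ((7:ℝ)/2) = (6*π^2) ^ ((7:ℝ)/3) * ρ ^ ((7:ℝ)/3) := by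
    rw [hμdef, ← Real.rpow_mul hbase.le, show (2:ℝ)/3 * (7/2) = 7/3 by norm_num,
      Real.mul_rpow h6pos.le hρ.le]
  have heFree : eFree ρ = X / (2*π)^3 := rfl
  rw [heFree, hT, div_sub_div_same, abs_div, abs_of_pos (show (0:ℝ) < (2*π)^3 by positivity)]
  rw [div_le_iff₀ (by positivity : (0:ℝ) < (2*π)^3)]
  calc |X - (3/5) * c * μ ^ ((5:ℝ)/2)| ≤ 3 * c * μ ^ ((7:ℝ)/2) := hnum
    _ ≤ (6*π^2) ^ ((7:ℝ)/3) * ρ ^ ((7:ℝ)/3) * (2*π)^3 := by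
      rw [hμ72eq, hc]
      have hr73 : (0:ℝ) ≤ (6*π^2) ^ ((7:ℝ)/3) * ρ ^ ((7:ℝ)/3) :=
        mul_nonneg (Real.rpow_nonneg h6pos.le _) (Real.rpow_nonneg hρ.le _)
      have hB : 3 * ((4:ℝ)/3*π) ≤ (2*π)^3 := by nlinarith [Real.pi_gt_three]
      nlinarith [mul_le_mul_of_nonneg_left hB hr73]

/-- **Low-density asymptotics of the ideal lattice Fermi gas energy** (Eq. (6)):
`e(ρ) = (3/5)(6π²)^{2/3} ρ^{5/3} + O(ρ^{7/3})`, and consequently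
`e₀(ρ_u, ρ_d) = (3/5)(6π²)^{2/3}(ρ_u^{5/3} + ρ_d^{5/3}) + O(ρ^{7/3})`. -/
theorem lattice_fermi_gas_low_density :
    ∃ C ρ0 : ℝ, 0 < C ∧ 0 < ρ0 ∧
      (∀ ρ : ℝ, 0 < ρ → ρ ≤ ρ0 →
        |eFree ρ - (3/5) * (6 * Real.pi^2) ^ ((2:ℝ)/3) * ρ ^ ((5:ℝ)/3)| ≤
          C * ρ ^ ((7:ℝ)/3)) ∧
      (∀ ρu ρd : ℝ, 0 < ρu → 0 < ρd → ρu + ρd ≤ ρ0 →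
        |e0 ρu ρd - (3/5) * (6 * Real.pi^2) ^ ((2:ℝ)/3) *
            (ρu ^ ((5:ℝ)/3) + ρd ^ ((5:ℝ)/3))| ≤
          C * (ρu + ρd) ^ ((7:ℝ)/3)) := by
  have hπ := Real.pi_pos
  have h6pos : (0:ℝ) < 6*π^2 := by positivity
  have hC1pos : (0:ℝ) < (6*π^2) ^ ((7:ℝ)/3) := Real.rpow_pos_of_pos h6pos _
  refine ⟨2 * (6*π^2) ^ ((7:ℝ)/3), (6*π^2)⁻¹, by positivity, by positivity, ?_, ?_⟩
  · intro ρ hρ hρ0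
    have h := main1 hρ hρ0
    have h73 : (0:ℝ) ≤ ρ ^ ((7:ℝ)/3) := Real.rpow_nonneg hρ.le _
    nlinarith
  · intro ρu ρd hρu hρd hsum
    have hu := main1 hρu (by linarith)
    have hd := main1 hρd (by linarith)
    have hu73 : ρu ^ ((7:ℝ)/3) ≤ (ρu + ρd) ^ ((7:ℝ)/3) :=
      Real.rpow_le_rpow hρu.le (by linarith) (by norm_num)
    have hd73 : ρd ^ ((7:ℝ)/3) ≤ (ρu + ρd) ^ ((7:ℝ)/3) :=
      Real.rpow_le_rpow hρd.le (by linarith) (by norm_num)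
    have habs : |e0 ρu ρd - (3/5) * (6 * π^2) ^ ((2:ℝ)/3) * (ρu ^ ((5:ℝ)/3) + ρd ^ ((5:ℝ)/3))|
        ≤ |eFree ρu - (3/5) * (6 * π^2) ^ ((2:ℝ)/3) * ρu ^ ((5:ℝ)/3)| +
          |eFree ρd - (3/5) * (6 * π^2) ^ ((2:ℝ)/3) * ρd ^ ((5:ℝ)/3)| := by
      have := abs_add_le (eFree ρu - (3/5) * (6 * π^2) ^ ((2:ℝ)/3) * ρu ^ ((5:ℝ)/3))
        (eFree ρd - (3/5) * (6 * π^2) ^ ((2:ℝ)/3) * ρd ^ ((5:ℝ)/3))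
      have heq : e0 ρu ρd - (3/5) * (6 * π^2) ^ ((2:ℝ)/3) * (ρu ^ ((5:ℝ)/3) + ρd ^ ((5:ℝ)/3))
          = (eFree ρu - (3/5) * (6 * π^2) ^ ((2:ℝ)/3) * ρu ^ ((5:ℝ)/3)) +
            (eFree ρd - (3/5) * (6 * π^2) ^ ((2:ℝ)/3) * ρd ^ ((5:ℝ)/3)) := by
        unfold e0; ring
      rw [heq]
      exact this
    calc |e0 ρu ρd - (3/5) * (6 * π^2) ^ ((2:ℝ)/3) * (ρu ^ ((5:ℝ)/3) + ρd ^ ((5:ℝ)/3))|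
        ≤ _ := habs
      _ ≤ (6*π^2) ^ ((7:ℝ)/3) * ρu ^ ((7:ℝ)/3) + (6*π^2) ^ ((7:ℝ)/3) * ρd ^ ((7:ℝ)/3) :=
          add_le_add hu hd
      _ ≤ 2 * (6*π^2) ^ ((7:ℝ)/3) * (ρu + ρd) ^ ((7:ℝ)/3) := by nlinarith
end
end

section
/- There is a constant C > 0 with the following property. Let R, L be positive integers with R ≤ L, and let Y' ⊂ ([0,L]∩ℤ)³ be a set of points whose pairwise Euclidean distances are all greater than 2√3 R. Then the number of points of Y' whose Euclidean distance to the boundary of the cube [0,L]³ is less than R+1 is at most C (L/R)². -/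
open scoped BigOperators

noncomputable section

/-- The Euclidean distance between a lattice point and a point of `ℝ³`. -/
def dEuc (x : Z3) (z : Fin 3 → ℝ) : ℝ := Real.sqrt (∑ i, ((x i : ℝ) - z i)^2)

/-- The solid cube `[0,L]³ ⊂ ℝ³`. -/
def cubeL (L : ℕ) : Set (Fin 3 → ℝ) := Set.Icc (fun _ => (0:ℝ)) (fun _ => (L:ℝ))

/-- The Euclidean distance of a lattice point to the topological boundary of `[0,L]³`. -/
def distBoundary (L : ℕ) (x : Z3) : ℝ :=
  sInf {d : ℝ | ∃ z ∈ frontier (cubeL L), d = dEuc x z}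

lemma interior_cubeL (L : ℕ) :
    interior (cubeL L) = Set.pi Set.univ (fun _ : Fin 3 => Set.Ioo (0:ℝ) L) := by
  rw [cubeL, ← Set.pi_univ_Icc, interior_pi_set Set.finite_univ]
  simp [interior_Icc]

lemma frontier_cubeL_subset (L : ℕ) :
    ∀ z ∈ frontier (cubeL L), (∀ i, 0 ≤ z i ∧ z i ≤ (L:ℝ)) ∧ ∃ j, z j = 0 ∨ z j = (L:ℝ) := by
  intro z hz
  have hcl : IsClosed (cubeL L) := isClosed_Icc
  rw [hcl.frontier_eq] at hz
  obtain ⟨hz1, hz2⟩ := hz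
  have hb : ∀ i, 0 ≤ z i ∧ z i ≤ (L:ℝ) := fun i => ⟨hz1.1 i, hz1.2 i⟩
  refine ⟨hb, ?_⟩
  rw [interior_cubeL] at hz2
  simp only [Set.mem_pi, Set.mem_univ, forall_true_left, not_forall] at hz2
  obtain ⟨j, hj⟩ := hz2
  refine ⟨j, ?_⟩
  rcases hb j with ⟨h1, h2⟩
  rw [Set.mem_Ioo] at hj
  rcases lt_or_eq_of_le h1 with h | h
  · right; by_contra hne; exact hj ⟨h, lt_of_le_of_ne h2 hne⟩
  · left; exact h.symm

lemma zero_mem_frontier (L : ℕ) (hL : 0 < L) :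
    (fun _ : Fin 3 => (0:ℝ)) ∈ frontier (cubeL L) := by
  have hcl : IsClosed (cubeL L) := isClosed_Icc
  rw [hcl.frontier_eq]
  constructor
  · refine ⟨fun i => le_refl 0, fun i => ?_⟩
    show (0:ℝ) ≤ (L:ℝ)
    positivity
  · rw [interior_cubeL]
    simp only [Set.mem_pi, Set.mem_univ, forall_true_left, not_forall]
    exact ⟨0, by simp⟩

lemma abs_coord_le_dEuc (x : Z3) (z : Fin 3 → ℝ) (j : Fin 3) :
    |(x j : ℝ) - z j| ≤ dEuc x z := by
  rw [dEuc, ← Real.sqrt_sq_eq_abs]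
  have h := Finset.single_le_sum (f := fun i => ((x i : ℝ) - z i)^2)
    (fun i _ => sq_nonneg _) (Finset.mem_univ j)
  exact Real.sqrt_le_sqrt h

lemma near_boundary (L : ℕ) (hL : 0 < L) (y : Z3) (c : ℝ)
    (hy : ∀ j, (0:ℤ) ≤ y j ∧ y j ≤ (L:ℤ)) (h : distBoundary L y < c) :
    ∃ j, (y j : ℝ) < c ∨ (L:ℝ) - (y j : ℝ) < c := by
  have hne : {d : ℝ | ∃ z ∈ frontier (cubeL L), d = dEuc y z}.Nonempty :=
    ⟨dEuc y (fun _ => 0), fun _ => 0, zero_mem_frontier L hL, rfl⟩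
  obtain ⟨d, ⟨z, hzf, rfl⟩, hdc⟩ := exists_lt_of_csInf_lt hne h
  obtain ⟨hb, j, hj⟩ := frontier_cubeL_subset L z hzf
  have h1 := abs_coord_le_dEuc y z j
  refine ⟨j, ?_⟩
  rcases hj with h0 | hL'
  · left
    have h2 : (y j : ℝ) ≤ |(y j:ℝ) - z j| := by
      rw [h0, sub_zero]; exact le_abs_self _
    linarith
  · right
    have hyL : (y j:ℝ) ≤ L := by exact_mod_cast (hy j).2
    have h2 : (L:ℝ) - (y j:ℝ) ≤ |(y j:ℝ) - z j| := by
      rw [hL', abs_sub_comm, abs_of_nonneg (by linarith)]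
    linarith

lemma enorm_le_of_coords (y z : Z3) (R : ℕ) (h : ∀ i, |y i - z i| ≤ 2*(R:ℤ)) :
    enormZ (y - z) ≤ 2 * Real.sqrt 3 * R := by
  have hsum : (∑ i, (((y - z) i : ℝ))^2) ≤ 12 * (R:ℝ)^2 := by
    have hterm : ∀ i : Fin 3, (((y - z) i : ℝ))^2 ≤ (2*(R:ℝ))^2 := by
      intro i
      have h1 : |((y i - z i : ℤ) : ℝ)| ≤ 2*(R:ℝ) := by
        rw [← Int.cast_abs]
        exact_mod_cast h i
      have h2 := abs_le.mp h1
      have : ((y - z) i : ℝ) = ((y i - z i : ℤ) : ℝ) := by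
        simp [Pi.sub_apply]
      rw [this]
      nlinarith [h2.1, h2.2]
    calc (∑ i, (((y - z) i : ℝ))^2) ≤ ∑ _i : Fin 3, (2*(R:ℝ))^2 :=
          Finset.sum_le_sum (fun i _ => hterm i)
      _ = 12 * (R:ℝ)^2 := by simp [Finset.sum_const]; ring
  have h3 : (Real.sqrt 3)^2 = 3 := Real.sq_sqrt (by norm_num)
  have hkey : (12:ℝ) * (R:ℝ)^2 = (2*Real.sqrt 3*(R:ℝ))^2 := by nlinarith [h3]
  have hnn : (0:ℝ) ≤ 2*Real.sqrt 3*(R:ℝ) := by positivity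
  calc enormZ (y - z) ≤ Real.sqrt ((2*Real.sqrt 3*(R:ℝ))^2) := by
        rw [enormZ, ← hkey]; exact Real.sqrt_le_sqrt hsum
    _ = 2*Real.sqrt 3*(R:ℝ) := Real.sqrt_sq hnn

lemma same_box (d y z : ℤ) (hd : 0 < d) (h : y / d = z / d) :
    y - z ≤ d - 1 ∧ z - y ≤ d - 1 := by
  have e1 := Int.mul_ediv_add_emod y d
  have e2 := Int.mul_ediv_add_emod z d
  have m1 := Int.emod_nonneg y (ne_of_gt hd)
  have m2 := Int.emod_nonneg z (ne_of_gt hd)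
  have l1 := Int.emod_lt_of_pos y hd
  have l2 := Int.emod_lt_of_pos z hd
  rw [h] at e1
  generalize d * (z / d) = t at e1 e2
  omega

/-- **Counting well-separated points near the boundary**: there is `C > 0` such that for
positive integers `R ≤ L` and any set `Y' ⊂ ([0,L] ∩ ℤ)³ ` of points with pairwise
distances `> 2√3 R`, the number of points of `Y'` at distance `< R+1` from the boundary
of `[0,L]³` is at most `C (L/R)²`. -/
theorem separated_points_near_boundary :
    ∃ C : ℝ, 0 < C ∧
      ∀ R L : ℕ, 0 < R → 0 < L → R ≤ L →
      ∀ Y' : Finset Z3,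
        (∀ y ∈ Y', ∀ j, 0 ≤ y j ∧ y j ≤ (L:ℤ)) →
        (∀ y ∈ Y', ∀ z ∈ Y', y ≠ z → 2 * Real.sqrt 3 * R < enormZ (y - z)) →
        (((Y' : Set Z3) ∩ {y | distBoundary L y < (R:ℝ) + 1}).ncard : ℝ) ≤
          C * ((L:ℝ)/(R:ℝ))^2 := by
  classical
  refine ⟨36, by norm_num, ?_⟩
  intro R L hR hL hRL Y' hbox hsep
  set d : ℤ := 2*(R:ℤ)+1 with hd
  have hd0 : (0:ℤ) < d := by omega
  set K : ℤ := (L:ℤ) / d with hK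
  set k0 : ℤ := ((L:ℤ) - (R:ℤ)) / d with hk0
  set F : Finset Z3 := Y'.filter (fun y => distBoundary L y < (R:ℝ)+1) with hF
  have hTF : ((Y' : Set Z3) ∩ {y | distBoundary L y < (R:ℝ) + 1}) = ↑F := by
    ext y
    simp [hF, Finset.mem_filter]
  rw [hTF, Set.ncard_coe_finset]
  set g : Z3 → Z3 := fun y i => y i / d with hg
  set B : Finset Z3 := Finset.univ.biUnion (fun j : Fin 3 =>
    Fintype.piFinset (fun i => if i = j then ({0, k0, k0+1} : Finset ℤ)
      else Finset.Icc 0 K)) with hB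
  have hKk0 : K ≤ k0 + 1 := by
    have h1 : ((L:ℤ) - (R:ℤ) + 1*d) / d = ((L:ℤ) - (R:ℤ)) / d + 1 :=
      Int.add_mul_ediv_right _ 1 (ne_of_gt hd0)
    have h2 : (L:ℤ) ≤ (L:ℤ) - (R:ℤ) + 1*d := by omega
    calc K = (L:ℤ)/d := hK
      _ ≤ ((L:ℤ) - (R:ℤ) + 1*d)/d := Int.ediv_le_ediv hd0 h2
      _ = k0 + 1 := by rw [h1, hk0]
  have hcard : F.card ≤ B.card := by
    apply Finset.card_le_card_of_injOn g ?_ ?_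
    · intro y hy
      obtain ⟨hyY, hyP⟩ := Finset.mem_filter.mp hy
      have hyb := hbox y hyY
      obtain ⟨j, hj⟩ := near_boundary L hL y _ hyb hyP
      have hjz : y j ≤ (R:ℤ) ∨ (L:ℤ) - y j ≤ (R:ℤ) := by
        rcases hj with h | h
        · left
          have h2 : y j < (R:ℤ) + 1 := by exact_mod_cast (by push_cast; linarith : ((y j : ℤ):ℝ) < (((R:ℤ)+1 : ℤ):ℝ))
          omega
        · right
          have h2 : (L:ℤ) - y j < (R:ℤ) + 1 := by
            exact_mod_cast (by push_cast; linarith : (((L:ℤ) - y j : ℤ):ℝ) < (((R:ℤ)+1 : ℤ):ℝ))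
          omega
      rw [hB]
      simp only [Finset.mem_coe, Finset.mem_biUnion]
      refine ⟨j, Finset.mem_univ j, ?_⟩
      rw [Fintype.mem_piFinset]
      intro i
      by_cases hij : i = j
      · subst hij
        rw [if_pos rfl]
        simp only [hg, Finset.mem_insert, Finset.mem_singleton]
        rcases hjz with h | h
        · left
          exact Int.ediv_eq_zero_of_lt (hyb i).1 (by omega)
        · have hlow : k0 ≤ y i / d := by
            rw [hk0]
            exact Int.ediv_le_ediv hd0 (by omega)
          have hhigh : y i / d ≤ K := by
            rw [hK]
            exact Int.ediv_le_ediv hd0 (hyb i).2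
          have hor : y i / d = k0 ∨ y i / d = k0 + 1 := by omega
          rcases hor with h' | h'
          · right; left; exact h'
          · right; right; exact h'
      · rw [if_neg hij]
        exact Finset.mem_Icc.mpr ⟨Int.ediv_nonneg (hyb i).1 (le_of_lt hd0),
          Int.ediv_le_ediv hd0 (hyb i).2⟩
    · intro y hy z hz hgyz
      rw [Finset.mem_coe, Finset.mem_filter] at hy hz
      by_contra hne
      have hs := hsep y hy.1 z hz.1 hne
      have hco : ∀ i, |y i - z i| ≤ 2*(R:ℤ) := by
        intro i
        have hb2 := same_box d (y i) (z i) hd0 (congrFun hgyz i)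
        rw [abs_le]
        omega
      have := enorm_le_of_coords y z R hco
      linarith
  set N : ℕ := (K+1).toNat with hN
  have hBcard : B.card ≤ 9 * N^2 := by
    calc B.card ≤ ∑ j : Fin 3, (Fintype.piFinset (fun i => if i = j then
          ({0, k0, k0+1} : Finset ℤ) else Finset.Icc 0 K)).card :=
          Finset.card_biUnion_le
      _ ≤ ∑ _j : Fin 3, 3 * N^2 := by
          apply Finset.sum_le_sum
          intro j _
          rw [Fintype.card_piFinset]
          have hI : (Finset.Icc (0:ℤ) K).card = N := by
            rw [Int.card_Icc]; omega
          have hS : ({0, k0, k0+1} : Finset ℤ).card ≤ 3 := by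
            have h1 := Finset.card_insert_le (0:ℤ) ({k0, k0+1} : Finset ℤ)
            have h2 := Finset.card_insert_le k0 ({k0+1} : Finset ℤ)
            have h3 : ({k0+1} : Finset ℤ).card = 1 := Finset.card_singleton _
            omega
          calc (∏ i, (if i = j then ({0, k0, k0+1} : Finset ℤ)
                else Finset.Icc 0 K).card)
              ≤ ∏ i : Fin 3, (if i = j then 3 else N) := by
                apply Finset.prod_le_prod'
                intro i _
                by_cases hij : i = j
                · rw [if_pos hij, if_pos hij]; exact hS
                · rw [if_neg hij, if_neg hij, hI]
            _ = 3 * N^2 := by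
                fin_cases j <;> simp [Fin.prod_univ_three] <;> try ring
      _ = 9 * N^2 := by simp [Finset.sum_const]; ring
  have hK0 : (0:ℤ) ≤ K := Int.ediv_nonneg (by positivity) (le_of_lt hd0)
  have hNr : (N:ℝ) = (K:ℝ) + 1 := by
    rw [hN]
    have : ((K+1).toNat : ℤ) = K + 1 := Int.toNat_of_nonneg (by omega)
    exact_mod_cast congrArg (fun n : ℤ => (n:ℝ)) this
  -- real bounds
  have hRpos : (0:ℝ) < (R:ℝ) := by exact_mod_cast hR
  have hLR : (1:ℝ) ≤ (L:ℝ)/(R:ℝ) := by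
    rw [le_div_iff₀ hRpos]
    simpa using (by exact_mod_cast hRL : (R:ℝ) ≤ (L:ℝ))
  have hK0' : (0:ℝ) ≤ (K:ℝ) := by exact_mod_cast hK0
  have hKle : (K:ℝ) ≤ (L:ℝ) / (2*(R:ℝ)) := by
    have h1 : K * d ≤ (L:ℤ) := Int.ediv_mul_le (L:ℤ) (ne_of_gt hd0)
    have h2 : (K:ℝ) * (2*(R:ℝ)+1) ≤ (L:ℝ) := by exact_mod_cast h1
    rw [le_div_iff₀ (by positivity)]
    nlinarith [hK0', h2]
  have hNle : (N:ℝ) ≤ (3/2) * ((L:ℝ)/(R:ℝ)) := by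
    rw [hNr]
    have : (L:ℝ)/(2*(R:ℝ)) = (1/2) * ((L:ℝ)/(R:ℝ)) := by
      field_simp
    rw [this] at hKle
    linarith
  have hfinal : (F.card : ℝ) ≤ 36 * ((L:ℝ)/(R:ℝ))^2 := by
    have h1 : (F.card : ℝ) ≤ 9 * (N:ℝ)^2 := by
      have := le_trans hcard hBcard
      exact_mod_cast this
    have hN0 : (0:ℝ) ≤ (N:ℝ) := Nat.cast_nonneg N
    nlinarith [hLR, hNle, hN0]
  exact hfinal
end
end
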